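/- If G is a graph of order n, then Γ_d(G) ≤ n − ⌊χ(G)/2⌋. -/

import Mathlib

/-- An orientation of a simple graph `G`: each edge gets exactly one direction. -/
def IsOrientation {V : Type*} (G : SimpleGraph V) (o : V → V → Prop) : Prop :=
  (∀ u v, o u v → G.Adj u v) ∧
  (∀ u v, G.Adj u v → (o u v ∨ o v u)) ∧
  (∀ u v, o u v → ¬ o v u)

/-- A directed dominating set: every vertex outside `S` has an in-neighbor in `S`. -/
def IsDirDomSet {V : Type*} (o : V → V → Prop) (S : Set V) : Prop :=
  ∀ v, v ∉ S → ∃ u ∈ S, o u v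

/-- The directed domination number of a digraph (orientation). -/
noncomputable def dirDomNum (V : Type*) [Fintype V] (o : V → V → Prop) : ℕ :=
  sInf {n | ∃ S : Finset V, S.card = n ∧ IsDirDomSet o ↑S}

/-- The (upper) directed domination number of a graph: the maximum of `dirDomNum`
over all orientations. -/
noncomputable def GammaD {V : Type*} [Fintype V] (G : SimpleGraph V) : ℕ :=
  sSup {n | ∃ o, IsOrientation G o ∧ dirDomNum V o = n}

/-- The independence number of a graph. -/
noncomputable def indepNum {V : Type*} [Fintype V] (G : SimpleGraph V) : ℕ :=
  sSup {n | ∃ S : Finset V, S.card = n ∧ ∀ u ∈ S, ∀ w ∈ S, u ≠ w → ¬ G.Adj u w}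

theorem stmt13 {V : Type*} [Fintype V] (G : SimpleGraph V) :
    GammaD G ≤ Fintype.card V - G.chromaticNumber.toNat / 2 := by
  classical
  set n := Fintype.card V with hn
  -- the matching predicate on finsets of ordered pairs
  set P : Finset (V × V) → Prop := fun M =>
    (∀ p ∈ M, G.Adj p.1 p.2) ∧
    (∀ p ∈ M, ∀ q ∈ M, p ≠ q →
      p.1 ≠ q.1 ∧ p.1 ≠ q.2 ∧ p.2 ≠ q.1 ∧ p.2 ≠ q.2) with hP
  -- a maximum matching
  obtain ⟨M, hMP, hMmax⟩ : ∃ M, P M ∧ ∀ M', P M' → M'.card ≤ M.card := by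
    obtain ⟨M, hM, hmax⟩ := Finset.exists_max_image
      (Finset.univ.filter P) Finset.card ⟨∅, by simp [hP]⟩
    refine ⟨M, (Finset.mem_filter.mp hM).2, fun M' hM' => ?_⟩
    exact hmax M' (Finset.mem_filter.mpr ⟨Finset.mem_univ _, hM'⟩)
  set matched : Finset V := M.biUnion (fun p => {p.1, p.2}) with hmatched
  -- unmatched vertices form an independent set, by maximality
  have hindep : ∀ u v, u ∉ matched → v ∉ matched → ¬ G.Adj u v := by
    intro u v hu hv hadj
    have hmem : ∀ w, w ∈ matched ↔ ∃ p ∈ M, w = p.1 ∨ w = p.2 := by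
      intro w; simp [hmatched, Finset.mem_biUnion, eq_comm]
    have huv : (u, v) ∉ M := by
      intro h; exact hu ((hmem u).mpr ⟨(u, v), h, Or.inl rfl⟩)
    have hcard : (insert (u, v) M).card = M.card + 1 := Finset.card_insert_of_notMem huv
    have hP' : P (insert (u, v) M) := by
      constructor
      · intro p hp
        rcases Finset.mem_insert.mp hp with h | h
        · subst h; exact hadj
        · exact hMP.1 p h
      · intro p hp q hq hpq
        rcases Finset.mem_insert.mp hp with h1 | h1 <;>
          rcases Finset.mem_insert.mp hq with h2 | h2
        · exact absurd (h1.trans h2.symm) hpq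
        · subst h1
          have h1' : u ∉ matched := hu
          have h2' : v ∉ matched := hv
          refine ⟨?_, ?_, ?_, ?_⟩ <;> intro he
          · exact h1' ((hmem u).mpr ⟨q, h2, Or.inl he⟩)
          · exact h1' ((hmem u).mpr ⟨q, h2, Or.inr he⟩)
          · exact h2' ((hmem v).mpr ⟨q, h2, Or.inl he⟩)
          · exact h2' ((hmem v).mpr ⟨q, h2, Or.inr he⟩)
        · subst h2
          refine ⟨?_, ?_, ?_, ?_⟩ <;> intro he
          · exact hu ((hmem u).mpr ⟨p, h1, Or.inl he.symm⟩)
          · exact hv ((hmem v).mpr ⟨p, h1, Or.inl he.symm⟩)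
          · exact hu ((hmem u).mpr ⟨p, h1, Or.inr he.symm⟩)
          · exact hv ((hmem v).mpr ⟨p, h1, Or.inr he.symm⟩)
        · exact hMP.2 p h1 q h2 hpq
    have := hMmax _ hP'
    omega
  -- a coloring with matched.card + 1 colors
  have hcol : G.Colorable (matched.card + 1) := by
    let c : V → Option {w // w ∈ matched} := fun v =>
      if h : v ∈ matched then some ⟨v, h⟩ else none
    have C : G.Coloring (Option {w // w ∈ matched}) := by
      refine SimpleGraph.Coloring.mk c ?_
      intro u v hadj hcontra
      by_cases hu : u ∈ matched <;> by_cases hv : v ∈ matched <;>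
        simp [c, hu, hv] at hcontra
      · exact hadj.ne hcontra
      · exact hindep u v hu hv hadj
    have := C.colorable
    rwa [Fintype.card_option, Fintype.card_coe] at this
  have hmcard : matched.card ≤ 2 * M.card := by
    calc matched.card ≤ ∑ p ∈ M, ({p.1, p.2} : Finset V).card :=
          Finset.card_biUnion_le
      _ ≤ ∑ p ∈ M, 2 := Finset.sum_le_sum (fun p _ => Finset.card_insert_le _ _)
      _ = 2 * M.card := by rw [Finset.sum_const, smul_eq_mul, mul_comm]
  have hchrom : G.chromaticNumber.toNat ≤ matched.card + 1 := by
    have h1 := hcol.chromaticNumber_le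
    have := ENat.toNat_le_toNat h1 (ENat.coe_ne_top _)
    simpa only [ENat.toNat_coe] using this
  set k : ℕ := G.chromaticNumber.toNat / 2 with hk
  have hkM : k ≤ M.card := by omega
  -- now bound GammaD
  refine csSup_le' ?_
  rintro m ⟨o, ho, rfl⟩
  -- pick a sub-matching of size k
  obtain ⟨M', hM'sub, hM'card⟩ := Finset.exists_subset_card_eq hkM
  have hM'P : P M' := ⟨fun p hp => hMP.1 p (hM'sub hp),
    fun p hp q hq hpq => hMP.2 p (hM'sub hp) q (hM'sub hq) hpq⟩
  set head : V × V → V := fun p => if o p.1 p.2 then p.2 else p.1 with hhead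
  set tail : V × V → V := fun p => if o p.1 p.2 then p.1 else p.2 with htail
  have horient : ∀ p ∈ M', o (tail p) (head p) := by
    intro p hp
    have hadj := hM'P.1 p hp
    rcases ho.2.1 _ _ hadj with h | h
    · simp [hhead, htail, h]
    · by_cases h' : o p.1 p.2 <;> simp [hhead, htail, h', h]
  have hheadmem : ∀ p : V × V, head p = p.1 ∨ head p = p.2 := by
    intro p; by_cases h : o p.1 p.2 <;> simp [hhead, h]
  have htailmem : ∀ p : V × V, tail p = p.1 ∨ tail p = p.2 := by
    intro p; by_cases h : o p.1 p.2 <;> simp [htail, h]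
  have hht : ∀ p ∈ M', head p ≠ tail p := by
    intro p hp
    have hne := (hM'P.1 p hp).ne
    by_cases h : o p.1 p.2 <;> simp [hhead, htail, h]
    · exact fun e => hne e.symm
    · exact hne
  set heads : Finset V := M'.image head with hheads
  have hheadinj : ∀ p ∈ M', ∀ q ∈ M', head p = head q → p = q := by
    intro p hp q hq he
    by_contra hpq
    have hd := hM'P.2 p hp q hq hpq
    rcases hheadmem p with h1 | h1 <;> rcases hheadmem q with h2 | h2 <;>
      rw [h1, h2] at he
    · exact hd.1 he
    · exact hd.2.1 he
    · exact hd.2.2.1 he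
    · exact hd.2.2.2 he
  have hheadscard : heads.card = k := by
    rw [hheads, Finset.card_image_of_injOn (fun p hp q hq => hheadinj p hp q hq), hM'card]
  set S : Finset V := Finset.univ \ heads with hS
  have hScard : S.card = n - k := by
    rw [hS, Finset.card_sdiff_of_subset (Finset.subset_univ _), hheadscard, Finset.card_univ, hn]
  have hdom : IsDirDomSet o ↑S := by
    intro v hv
    have hvheads : v ∈ heads := by
      by_contra h
      exact hv (by simp [hS, h])
    obtain ⟨p, hp, hpv⟩ := Finset.mem_image.mp hvheads
    refine ⟨tail p, ?_, hpv ▸ horient p hp⟩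
    simp only [hS, Finset.coe_sdiff, Set.mem_diff, Finset.coe_univ, Set.mem_univ, true_and,
      Finset.mem_coe]
    intro hcon
    obtain ⟨q, hq, hqe⟩ := Finset.mem_image.mp hcon
    by_cases hpq : p = q
    · subst hpq; exact hht p hp hqe
    · have hd := hM'P.2 q hq p hp (fun e => hpq e.symm)
      rcases hheadmem q with h1 | h1 <;> rcases htailmem p with h2 | h2 <;>
        rw [h1] at hqe
      all_goals first
        | exact hd.1 (hqe.trans h2)
        | exact hd.2.1 (hqe.trans h2)
        | exact hd.2.2.1 (hqe.trans h2)
        | exact hd.2.2.2 (hqe.trans h2)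
  have : dirDomNum V o ≤ S.card := Nat.sInf_le ⟨S, rfl, hdom⟩
  omega
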